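/- Define Q : ℝ × ℝ × ℝ² → ℝ by Q(u,v,w) := u·v − ‖w‖², where ‖·‖ is the Euclidean norm on ℝ². (i) For every c > 0, the level set {Q = c} has exactly two connected components, namely {Q = c} ∩ {u > 0} and {Q = c} ∩ {u < 0} (each nonempty and connected), and the complement ℝ⁴ ∖ {Q = c} has exactly three connected components, namely {Q < c}, {Q > c} ∩ {u > 0}, and {Q > c} ∩ {u < 0}. (ii) For every c < 0, the level set {Q = c} is nonempty and connected, and the complement ℝ⁴ ∖ {Q = c} has exactly two connected components, namely {Q < c} and {Q > c}. -/

import Mathlib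

/-- The quadratic `Q(u,v,w) := u·v − ‖w‖²` on `ℝ × ℝ × ℝ²`. -/
noncomputable def Qf (x : ℝ × ℝ × EuclideanSpace ℝ (Fin 2)) : ℝ :=
  x.1 * x.2.1 - ‖x.2.2‖ ^ 2

namespace Stmt11Aux

open Set

abbrev E2 := EuclideanSpace ℝ (Fin 2)
abbrev Xs := ℝ × ℝ × EuclideanSpace ℝ (Fin 2)

lemma Qmk (p q : ℝ) (r : E2) : Qf (p, q, r) = p * q - ‖r‖ ^ 2 := rfl

lemma contQ : Continuous Qf := by
  unfold Qf; fun_prop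

lemma joinedIn_of_path {S : Set Xs} (γ : ℝ → Xs) (hγ : ContinuousOn γ (Icc 0 1))
    (h : ∀ t ∈ Icc (0:ℝ) 1, γ t ∈ S) {a b : Xs} (ha : γ 0 = a) (hb : γ 1 = b) :
    JoinedIn S a b := by
  subst ha hb
  refine ⟨⟨⟨fun t => γ t.1, hγ.comp_continuous continuous_subtype_val fun t => t.2⟩, ?_, ?_⟩,
    fun t => h t t.2⟩ <;> simp

lemma mem_lt {A B c t : ℝ} (hA : A < c) (hB : B < c) (h0 : 0 ≤ t) (h1 : t ≤ 1) {e : ℝ}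
    (he : e = (1 - t) * A + t * B) : e < c := by nlinarith [mul_nonneg h0 (sub_pos.2 hB).le, mul_nonneg (sub_nonneg.2 h1) (sub_pos.2 hA).le]

lemma mem_gt {A B c t : ℝ} (hA : c < A) (hB : c < B) (h0 : 0 ≤ t) (h1 : t ≤ 1) {e : ℝ}
    (he : e = (1 - t) * A + t * B) : c < e := by nlinarith [mul_nonneg h0 (sub_pos.2 hB).le, mul_nonneg (sub_nonneg.2 h1) (sub_pos.2 hA).le]

lemma norm_smul_sq (r : ℝ) (w : E2) : ‖r • w‖ ^ 2 = r ^ 2 * ‖w‖ ^ 2 := by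
  rw [norm_smul, mul_pow, Real.norm_eq_abs, sq_abs]

def negX : Xs → Xs := fun x => (-x.1, -x.2.1, x.2.2)

lemma negX_cont : Continuous negX := by unfold negX; fun_prop

lemma Qf_negX (x : Xs) : Qf (negX x) = Qf x := by
  simp [Qf, negX]

lemma negX_invol (x : Xs) : negX (negX x) = x := by simp [negX]

lemma negX_img (p : ℝ → Prop) :
    negX '' ({x : Xs | p (Qf x)} ∩ {x | 0 < x.1}) = {x : Xs | p (Qf x)} ∩ {x | x.1 < 0} := by
  ext x
  constructor
  · rintro ⟨y, ⟨h1, h2⟩, rfl⟩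
    refine ⟨by simpa [Qf_negX] using h1, by simpa [negX] using h2⟩
  · rintro ⟨h1, h2⟩
    exact ⟨negX x, ⟨by simpa [Qf_negX] using h1, by simpa [negX] using h2⟩, negX_invol x⟩

lemma comp_eq {S U V : Set Xs} (hUo : IsOpen U) (hVo : IsOpen V) (hd : Disjoint U V)
    (hcov : S ⊆ U ∪ V) (hc : IsConnected (S ∩ U)) {x : Xs} (hxS : x ∈ S) (hxU : x ∈ U) :
    connectedComponentIn S x = S ∩ U := by
  have hKs := connectedComponentIn_subset S x
  have hK : IsPreconnected (connectedComponentIn S x) := isPreconnected_connectedComponentIn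
  have hsub : connectedComponentIn S x ⊆ U :=
    hK.subset_left_of_subset_union hUo hVo hd (hKs.trans hcov)
      ⟨x, mem_connectedComponentIn hxS, hxU⟩
  exact subset_antisymm (fun y hy => ⟨hKs hy, hsub hy⟩)
    (hc.isPreconnected.subset_connectedComponentIn ⟨hxS, hxU⟩ inter_subset_left)


lemma conn_level_pos {c : ℝ} (hc : 0 < c) :
    IsPathConnected ({x : Xs | Qf x = c} ∩ {x | 0 < x.1}) := by
  refine ⟨(1, c, 0), ⟨by simp [Qmk], by norm_num⟩, ?_⟩
  rintro ⟨u, v, w⟩ ⟨hQ, hu⟩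
  simp only [Qmk, mem_setOf_eq] at hQ
  simp only [mem_setOf_eq] at hu
  have hu0 : u ≠ 0 := ne_of_gt hu
  have j1 : JoinedIn ({x : Xs | Qf x = c} ∩ {x | 0 < x.1}) (u, v, w) (u, c / u, 0) := by
    refine joinedIn_of_path
      (fun t => (u, (c + (1 - t) ^ 2 * ‖w‖ ^ 2) / u, ((1:ℝ) - t) • w)) (by fun_prop) ?_ ?_ ?_
    · intro t ht
      refine ⟨?_, hu⟩
      simp only [Qmk, mem_setOf_eq, norm_smul_sq]
      field_simp
      ring
    · have hv : (c + ‖w‖ ^ 2) / u = v := by field_simp; linarith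
      norm_num [hv]
    · norm_num
  have j2 : JoinedIn ({x : Xs | Qf x = c} ∩ {x | 0 < x.1}) (u, c / u, 0) (1, c, 0) := by
    have hd : ∀ t ∈ Icc (0:ℝ) 1, 0 < u + t * (1 - u) := by
      intro t ht
      exact mem_gt hu one_pos ht.1 ht.2 (by ring)
    refine joinedIn_of_path
      (fun t => (u + t * (1 - u), c / (u + t * (1 - u)), 0)) ?_ ?_ ?_ ?_
    · refine (ContinuousOn.prodMk (by fun_prop) (ContinuousOn.prodMk ?_ (by fun_prop)))
      exact ContinuousOn.div continuousOn_const (by fun_prop) fun t ht => (hd t ht).ne'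
    · intro t ht
      refine ⟨?_, hd t ht⟩
      simp only [Qmk, mem_setOf_eq]
      rw [norm_zero]
      field_simp [(hd t ht).ne']
      ring
    · norm_num
    · norm_num
  exact (j1.trans j2).symm

lemma conn_lt_pos {c : ℝ} (hc : 0 < c) : IsPathConnected {x : Xs | Qf x < c} := by
  refine ⟨(0, 0, 0), by simp only [Set.mem_setOf_eq, Qmk, norm_zero]; nlinarith, ?_⟩
  rintro ⟨u, v, w⟩ hQ
  simp only [Qmk, mem_setOf_eq] at hQ
  have hw2 : (0:ℝ) ≤ ‖w‖ ^ 2 := by positivity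
  have j1 : JoinedIn {x : Xs | Qf x < c} (u, v, w) (u, 0, w) := by
    refine joinedIn_of_path (fun t => (u, (1 - t) * v, w)) (by fun_prop) ?_ (by norm_num)
      (by norm_num)
    intro t ht
    simp only [Qmk, mem_setOf_eq]
    exact mem_lt hQ (by linarith : (0:ℝ) - ‖w‖ ^ 2 < c) ht.1 ht.2 (by ring)
  have j2 : JoinedIn {x : Xs | Qf x < c} (u, 0, w) (0, 0, w) := by
    refine joinedIn_of_path (fun t => ((1 - t) * u, 0, w)) (by fun_prop) ?_ (by norm_num)
      (by norm_num)
    intro t ht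
    simp only [Qmk, mem_setOf_eq]
    nlinarith
  have j3 : JoinedIn {x : Xs | Qf x < c} (0, 0, w) (0, 0, 0) := by
    refine joinedIn_of_path (fun t => ((0:ℝ), (0:ℝ), ((1:ℝ) - t) • w)) (by fun_prop) ?_
      (by norm_num) (by norm_num)
    intro t ht
    simp only [Qmk, mem_setOf_eq, norm_smul_sq]
    nlinarith [sq_nonneg ((1:ℝ) - t)]
  exact ((j1.trans j2).trans j3).symm

lemma conn_gt_pos {c : ℝ} (hc : 0 < c) :
    IsPathConnected ({x : Xs | c < Qf x} ∩ {x | 0 < x.1}) := by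
  refine ⟨(1, c + 1, 0), ⟨by norm_num [Qmk, Set.mem_setOf_eq], by norm_num [Set.mem_setOf_eq]⟩, ?_⟩
  rintro ⟨u, v, w⟩ ⟨hQ, hu⟩
  simp only [Qmk, mem_setOf_eq] at hQ
  simp only [mem_setOf_eq] at hu
  have hw2 : (0:ℝ) ≤ ‖w‖ ^ 2 := by positivity
  have huv : c < u * v := by nlinarith
  set S := {x : Xs | c < Qf x} ∩ {x | 0 < x.1} with hS
  have hui : 0 < u⁻¹ := inv_pos.2 hu
  set V : ℝ := (c + 1) * (u⁻¹ + 1) with hV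
  have hViu : c < u * V := by
    have : u * V = (c + 1) * (u * u⁻¹) + (c + 1) * u := by ring
    rw [mul_inv_cancel₀ (ne_of_gt hu)] at this
    nlinarith
  have hV1 : c < 1 * V := by nlinarith
  have j1 : JoinedIn S (u, v, w) (u, v, 0) := by
    refine joinedIn_of_path (fun t => (u, v, ((1:ℝ) - t) • w)) (by fun_prop) ?_ (by norm_num)
      (by norm_num)
    intro t ht
    refine ⟨?_, hu⟩
    simp only [Qmk, mem_setOf_eq, norm_smul_sq]
    nlinarith [mul_nonneg (mul_nonneg ht.1 (sub_nonneg.2 ht.2)) hw2, mul_nonneg ht.1 hw2]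
  have j2 : JoinedIn S (u, v, 0) (u, V, 0) := by
    refine joinedIn_of_path (fun t => (u, (1 - t) * v + t * V, 0)) (by fun_prop) ?_ (by norm_num)
      (by norm_num)
    intro t ht
    refine ⟨?_, hu⟩
    simp only [Qmk, mem_setOf_eq]
    rw [norm_zero]
    exact mem_gt huv hViu ht.1 ht.2 (by ring)
  have j3 : JoinedIn S (u, V, 0) (1, V, 0) := by
    refine joinedIn_of_path (fun t => ((1 - t) * u + t * 1, V, 0)) (by fun_prop) ?_ (by norm_num)
      (by norm_num)
    intro t ht
    refine ⟨?_, mem_gt hu one_pos ht.1 ht.2 rfl⟩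
    simp only [Qmk, mem_setOf_eq]
    rw [norm_zero]
    exact mem_gt hViu hV1 ht.1 ht.2 (by ring)
  have j4 : JoinedIn S (1, V, 0) (1, c + 1, 0) := by
    refine joinedIn_of_path (fun t => ((1:ℝ), (1 - t) * V + t * (c + 1), 0)) (by fun_prop) ?_
      (by norm_num) (by norm_num)
    intro t ht
    refine ⟨?_, by norm_num [Set.mem_setOf_eq]⟩
    simp only [Qmk, mem_setOf_eq]
    rw [norm_zero]
    exact mem_gt hV1 (by linarith : c < (1:ℝ) * (c + 1)) ht.1 ht.2 (by ring)
  exact (((j1.trans j2).trans j3).trans j4).symm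

lemma conn_level_neg {c : ℝ} (hc : c < 0) : IsPathConnected {x : Xs | Qf x = c} := by
  set w0 : E2 := EuclideanSpace.single 0 (Real.sqrt (-c)) with hw0def
  have hw0 : ‖w0‖ ^ 2 = -c := by
    rw [hw0def, EuclideanSpace.norm_single, Real.norm_eq_abs, sq_abs, Real.sq_sqrt (by linarith)]
  set S := {x : Xs | Qf x = c} with hS
  have hbase : ((1:ℝ), (0:ℝ), w0) ∈ S := by
    simp only [hS, Qmk, mem_setOf_eq, hw0]; ring
  refine ⟨(1, 0, w0), hbase, ?_⟩
  rintro ⟨u, v, w⟩ hQ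
  simp only [hS, Qmk, mem_setOf_eq] at hQ
  -- the path from (1, *, w') moving w' to w0 while adjusting v
  have jmove : ∀ w' : E2, JoinedIn S (1, ‖w'‖ ^ 2 + c, w') (1, 0, w0) := by
    intro w'
    refine joinedIn_of_path
      (fun t => ((1:ℝ), ‖w' + t • (w0 - w')‖ ^ 2 + c, w' + t • (w0 - w'))) (by fun_prop) ?_ ?_ ?_
    · intro t ht
      simp only [hS, Qmk, mem_setOf_eq]
      ring
    · norm_num
    · norm_num [hw0]
  rcases eq_or_ne u 0 with hu | hu
  · subst hu
    have hw : ‖w‖ ^ 2 = -c := by linarith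
    have j1 : JoinedIn S ((0:ℝ), v, w) ((0:ℝ), (0:ℝ), w) := by
      refine joinedIn_of_path (fun t => ((0:ℝ), (1 - t) * v, w)) (by fun_prop) ?_ (by norm_num)
        (by norm_num)
      intro t ht
      simp only [hS, Qmk, mem_setOf_eq]
      linarith
    have j2 : JoinedIn S ((0:ℝ), (0:ℝ), w) ((1:ℝ), (0:ℝ), w) := by
      refine joinedIn_of_path (fun t => (t, (0:ℝ), w)) (by fun_prop) ?_ (by norm_num)
        (by norm_num)
      intro t ht
      simp only [hS, Qmk, mem_setOf_eq]
      linarith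
    have j3 : JoinedIn S ((1:ℝ), (0:ℝ), w) (1, 0, w0) := by
      have : ((1:ℝ), (0:ℝ), w) = ((1:ℝ), ‖w‖ ^ 2 + c, w) := by rw [hw]; norm_num
      rw [this]
      exact jmove w
    exact ((j1.trans j2).trans j3).symm
  · have j1 : JoinedIn S (u, v, w) (u, (0:ℝ), w0) := by
      refine joinedIn_of_path
        (fun t => (u, (‖w + t • (w0 - w)‖ ^ 2 + c) / u, w + t • (w0 - w))) (by fun_prop) ?_ ?_ ?_
      · intro t ht
        simp only [hS, Qmk, mem_setOf_eq]
        field_simp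
        ring
      · have hv : (‖w‖ ^ 2 + c) / u = v := by field_simp; linarith
        norm_num [hv]
      · norm_num [hw0]
    have j2 : JoinedIn S (u, (0:ℝ), w0) ((1:ℝ), (0:ℝ), w0) := by
      refine joinedIn_of_path (fun t => ((1 - t) * u + t, (0:ℝ), w0)) (by fun_prop) ?_
        (by norm_num) (by norm_num)
      intro t ht
      simp only [hS, Qmk, mem_setOf_eq, hw0]
      ring
    exact (j1.trans j2).symm

lemma conn_gt_neg {c : ℝ} (hc : c < 0) : IsPathConnected {x : Xs | c < Qf x} := by
  set S := {x : Xs | c < Qf x} with hS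
  refine ⟨(0, 0, 0), by simp only [hS, Set.mem_setOf_eq, Qmk, norm_zero]; nlinarith, ?_⟩
  rintro ⟨u, v, w⟩ hQ
  simp only [hS, Qmk, mem_setOf_eq] at hQ
  have hw2 : (0:ℝ) ≤ ‖w‖ ^ 2 := by positivity
  have j1 : JoinedIn S (u, v, w) (u, v, 0) := by
    refine joinedIn_of_path (fun t => (u, v, ((1:ℝ) - t) • w)) (by fun_prop) ?_ (by norm_num)
      (by norm_num)
    intro t ht
    simp only [hS, Qmk, mem_setOf_eq, norm_smul_sq]
    nlinarith [mul_nonneg (mul_nonneg ht.1 (sub_nonneg.2 ht.2)) hw2, mul_nonneg ht.1 hw2]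
  have j2 : JoinedIn S (u, v, 0) (u, 0, 0) := by
    refine joinedIn_of_path (fun t => (u, (1 - t) * v, 0)) (by fun_prop) ?_ (by norm_num)
      (by norm_num)
    intro t ht
    simp only [hS, Qmk, mem_setOf_eq]
    rw [norm_zero]
    exact mem_gt (by nlinarith : c < u * v) (by nlinarith : c < (0:ℝ)) ht.1 ht.2 (by ring)
  have j3 : JoinedIn S (u, 0, 0) (0, 0, 0) := by
    refine joinedIn_of_path (fun t => ((1 - t) * u, 0, 0)) (by fun_prop) ?_ (by norm_num)
      (by norm_num)
    intro t ht
    simp only [hS, Qmk, mem_setOf_eq]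
    rw [norm_zero]
    nlinarith
  exact ((j1.trans j2).trans j3).symm

lemma conn_lt_neg {c : ℝ} (hc : c < 0) : IsPathConnected {x : Xs | Qf x < c} := by
  set S := {x : Xs | Qf x < c} with hS
  have hbase : ((1:ℝ), c - 1, (0:E2)) ∈ S := by
    simp only [hS, Set.mem_setOf_eq, Qmk, norm_zero]; nlinarith
  refine ⟨(1, c - 1, 0), hbase, ?_⟩
  rintro ⟨u, v, w⟩ hQ
  simp only [hS, Qmk, mem_setOf_eq] at hQ
  set M : ℝ := |u * v| + 1 - c with hM
  have hM0 : 0 < M := by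
    have := abs_nonneg (u * v); nlinarith
  have habs1 : u * v ≤ |u * v| := le_abs_self _
  have habs2 : -|u * v| ≤ u * v := neg_abs_le _
  obtain ⟨W, hW1, j1⟩ : ∃ W : E2, M ≤ ‖W‖ ^ 2 ∧ JoinedIn S (u, v, w) (u, v, W) := by
    rcases eq_or_ne w 0 with hw | hw
    · subst hw
      rw [norm_zero] at hQ
      refine ⟨(Real.sqrt M) • EuclideanSpace.single 0 1, ?_, ?_⟩
      · rw [norm_smul_sq, EuclideanSpace.norm_single, Real.norm_eq_abs]
        rw [Real.sq_sqrt hM0.le]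
        norm_num
      · refine joinedIn_of_path
          (fun t => (u, v, (t * Real.sqrt M) • EuclideanSpace.single 0 1)) (by fun_prop) ?_
          (by norm_num) (by norm_num)
        intro t ht
        simp only [hS, Qmk, mem_setOf_eq, norm_smul_sq, EuclideanSpace.norm_single,
          Real.norm_eq_abs]
        nlinarith [sq_nonneg (t * Real.sqrt M)]
    · have hwpos : 0 < ‖w‖ ^ 2 := by
        have := norm_pos_iff.2 hw
        positivity
      set K : ℝ := M / ‖w‖ ^ 2 with hK
      have hK0 : 0 < K := div_pos hM0 hwpos
      refine ⟨(1 + K) • w, ?_, ?_⟩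
      · rw [norm_smul_sq]
        have : K * ‖w‖ ^ 2 = M := div_mul_cancel₀ _ (ne_of_gt hwpos)
        nlinarith
      · refine joinedIn_of_path (fun t => (u, v, (1 + t * K) • w)) (by fun_prop) ?_
          (by norm_num) (by norm_num)
        intro t ht
        simp only [hS, Qmk, mem_setOf_eq, norm_smul_sq]
        have h1 : 1 ≤ (1 + t * K) ^ 2 := by nlinarith [mul_nonneg ht.1 hK0.le]
        nlinarith [mul_nonneg (sub_nonneg.2 h1) hwpos.le]
  have hWc : ∀ s : ℝ, s ≤ |u * v| → s - ‖W‖ ^ 2 < c := by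
    intro s hs; nlinarith
  have j2 : JoinedIn S (u, v, W) (0, v, W) := by
    refine joinedIn_of_path (fun t => ((1 - t) * u, v, W)) (by fun_prop) ?_ (by norm_num)
      (by norm_num)
    intro t ht
    simp only [hS, Qmk, mem_setOf_eq]
    refine hWc _ ?_
    rcases le_or_gt 0 (u * v) with h | h
    · nlinarith [mul_nonneg ht.1 h, habs1]
    · nlinarith [mul_nonneg (sub_nonneg.2 ht.2) (neg_nonneg.2 h.le), abs_nonneg (u * v)]
  have j3 : JoinedIn S (0, v, W) (0, c - 1, W) := by
    refine joinedIn_of_path (fun t => ((0:ℝ), (1 - t) * v + t * (c - 1), W)) (by fun_prop) ?_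
      (by norm_num) (by norm_num)
    intro t ht
    simp only [hS, Qmk, mem_setOf_eq]
    have h0 := hWc 0 (abs_nonneg (u * v))
    nlinarith
  have j4 : JoinedIn S (0, c - 1, W) (1, c - 1, W) := by
    refine joinedIn_of_path (fun t => (t, c - 1, W)) (by fun_prop) ?_ (by norm_num)
      (by norm_num)
    intro t ht
    simp only [hS, Qmk, mem_setOf_eq]
    have h0 := hWc 0 (abs_nonneg (u * v))
    nlinarith [mul_nonneg ht.1 (by linarith : (0:ℝ) ≤ 1 - c)]
  have j5 : JoinedIn S (1, c - 1, W) (1, c - 1, 0) := by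
    refine joinedIn_of_path (fun t => ((1:ℝ), c - 1, ((1:ℝ) - t) • W)) (by fun_prop) ?_
      (by norm_num) (by norm_num)
    intro t ht
    simp only [hS, Qmk, mem_setOf_eq, norm_smul_sq]
    nlinarith [mul_nonneg (sq_nonneg ((1:ℝ) - t)) (by positivity : (0:ℝ) ≤ ‖W‖ ^ 2)]
  exact ((((j1.trans j2).trans j3).trans j4).trans j5).symm

lemma openU : IsOpen {x : Xs | 0 < x.1} := isOpen_lt continuous_const continuous_fst
lemma openU' : IsOpen {x : Xs | x.1 < 0} := isOpen_lt continuous_fst continuous_const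
lemma openLt (c : ℝ) : IsOpen {x : Xs | Qf x < c} := isOpen_lt contQ continuous_const
lemma openGt (c : ℝ) : IsOpen {x : Xs | c < Qf x} := isOpen_lt continuous_const contQ

lemma disjUU' : Disjoint {x : Xs | 0 < x.1} {x : Xs | x.1 < 0} :=
  Set.disjoint_left.2 fun a h1 h2 => absurd h2 (by simp only [mem_setOf_eq] at h1 ⊢; linarith)

lemma u_ne_zero {c : ℝ} (hc : 0 < c) {x : Xs} (hx : c ≤ Qf x) : x.1 ≠ 0 := by
  have hq : x.1 * x.2.1 - ‖x.2.2‖ ^ 2 = Qf x := rfl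
  have hw : (0:ℝ) ≤ ‖x.2.2‖ ^ 2 := by positivity
  intro h
  rw [h] at hq
  simp only [zero_mul, zero_sub] at hq
  nlinarith

end Stmt11Aux

open Stmt11Aux Set in
/-- Structure of the level sets of `Q(u,v,w) = uv − ‖w‖²`.
(i) For `c > 0`, the level set `{Q = c}` has exactly two connected components, namely
`{Q = c} ∩ {u > 0}` and `{Q = c} ∩ {u < 0}`, and its complement has exactly three,
namely `{Q < c}`, `{Q > c} ∩ {u > 0}` and `{Q > c} ∩ {u < 0}`.
(ii) For `c < 0`, the level set `{Q = c}` is nonempty and connected and its complement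
has exactly two connected components, `{Q < c}` and `{Q > c}`.
("Exactly these components" is expressed by: each named set is connected (hence
nonempty) and every connected component in the ambient set equals one of them.) -/
theorem stmt_11 :
    (∀ c : ℝ, 0 < c →
      IsConnected ({x | Qf x = c} ∩ {x | 0 < x.1}) ∧
      IsConnected ({x | Qf x = c} ∩ {x | x.1 < 0}) ∧
      {x | Qf x = c} =
        ({x | Qf x = c} ∩ {x | 0 < x.1}) ∪ ({x | Qf x = c} ∩ {x | x.1 < 0}) ∧
      (∀ x, Qf x = c →
        connectedComponentIn {y | Qf y = c} x = {y | Qf y = c} ∩ {y | 0 < y.1} ∨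
        connectedComponentIn {y | Qf y = c} x = {y | Qf y = c} ∩ {y | y.1 < 0}) ∧
      IsConnected {x | Qf x < c} ∧
      IsConnected ({x | c < Qf x} ∩ {x | 0 < x.1}) ∧
      IsConnected ({x | c < Qf x} ∩ {x | x.1 < 0}) ∧
      (∀ x, Qf x ≠ c →
        connectedComponentIn {y | Qf y ≠ c} x = {y | Qf y < c} ∨
        connectedComponentIn {y | Qf y ≠ c} x = {y | c < Qf y} ∩ {y | 0 < y.1} ∨
        connectedComponentIn {y | Qf y ≠ c} x = {y | c < Qf y} ∩ {y | y.1 < 0})) ∧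
    (∀ c : ℝ, c < 0 →
      IsConnected {x | Qf x = c} ∧
      IsConnected {x | Qf x < c} ∧
      IsConnected {x | c < Qf x} ∧
      (∀ x, Qf x ≠ c →
        connectedComponentIn {y | Qf y ≠ c} x = {y | Qf y < c} ∨
        connectedComponentIn {y | Qf y ≠ c} x = {y | c < Qf y})) := by
  constructor
  · intro c hc
    have cA : IsConnected ({x : Xs | Qf x = c} ∩ {x | 0 < x.1}) :=
      (conn_level_pos hc).isConnected
    have cB : IsConnected ({x : Xs | Qf x = c} ∩ {x | x.1 < 0}) := by
      have himg : negX '' ({x : Xs | Qf x = c} ∩ {x | 0 < x.1})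
          = {x : Xs | Qf x = c} ∩ {x | x.1 < 0} := negX_img (fun r => r = c)
      exact himg ▸ cA.image negX negX_cont.continuousOn
    have cLt : IsConnected {x : Xs | Qf x < c} := (conn_lt_pos hc).isConnected
    have cGtA : IsConnected ({x : Xs | c < Qf x} ∩ {x | 0 < x.1}) :=
      (conn_gt_pos hc).isConnected
    have cGtB : IsConnected ({x : Xs | c < Qf x} ∩ {x | x.1 < 0}) := by
      have himg : negX '' ({x : Xs | c < Qf x} ∩ {x | 0 < x.1})
          = {x : Xs | c < Qf x} ∩ {x | x.1 < 0} := negX_img (fun r => c < r)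
      exact himg ▸ cGtA.image negX negX_cont.continuousOn
    have hcover : {x : Xs | Qf x = c} ⊆ {x : Xs | 0 < x.1} ∪ {x : Xs | x.1 < 0} := by
      intro y hy
      rcases (u_ne_zero hc (le_of_eq hy.symm)).lt_or_gt with h | h
      · exact Or.inr h
      · exact Or.inl h
    refine ⟨cA, cB, ?_, ?_, cLt, cGtA, cGtB, ?_⟩
    · ext y
      constructor
      · intro hy
        rcases hcover hy with h | h
        · exact Or.inl ⟨hy, h⟩
        · exact Or.inr ⟨hy, h⟩
      · rintro (⟨hy, _⟩ | ⟨hy, _⟩) <;> exact hy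
    · intro x hx
      rcases (u_ne_zero hc (le_of_eq hx.symm)).lt_or_gt with h | h
      · exact Or.inr (comp_eq openU' openU disjUU'.symm
          (fun y hy => (hcover hy).symm) cB hx h)
      · exact Or.inl (comp_eq openU openU' disjUU' hcover cA hx h)
    · intro x hx
      set S := {y : Xs | Qf y ≠ c} with hS
      have hsubLt : {y : Xs | Qf y < c} ⊆ S := fun y hy => ne_of_lt hy
      have hsubA : {y : Xs | c < Qf y} ∩ {y | 0 < y.1} ⊆ S := fun y hy => ne_of_gt hy.1
      have hsubB : {y : Xs | c < Qf y} ∩ {y | y.1 < 0} ⊆ S := fun y hy => ne_of_gt hy.1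
      have hcov3 : ∀ y ∈ S, Qf y < c ∨ (c < Qf y ∧ 0 < y.1) ∨ (c < Qf y ∧ y.1 < 0) := by
        intro y hy
        rcases lt_or_gt_of_ne (hy : Qf y ≠ c) with h | h
        · exact Or.inl h
        · rcases (u_ne_zero hc h.le).lt_or_gt with h' | h'
          · exact Or.inr (Or.inr ⟨h, h'⟩)
          · exact Or.inr (Or.inl ⟨h, h'⟩)
      rcases hcov3 x hx with h | ⟨h, h'⟩ | ⟨h, h'⟩
      · refine Or.inl ?_
        have := comp_eq (S := S) (openLt c)
          ((openGt c).inter openU |>.union ((openGt c).inter openU'))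
          ?_ ?_ ?_ hx h
        · rw [this, inter_eq_right.2 hsubLt]
        · refine Set.disjoint_left.2 fun a h1 h2 => ?_
          simp only [mem_setOf_eq] at h1
          rcases h2 with h2 | h2 <;>
            (simp only [mem_inter_iff, mem_setOf_eq] at h2; linarith [h2.1])
        · intro y hy
          rcases hcov3 y hy with h2 | h2 | h2
          · exact Or.inl h2
          · exact Or.inr (Or.inl ⟨h2.1, h2.2⟩)
          · exact Or.inr (Or.inr ⟨h2.1, h2.2⟩)
        · rw [inter_eq_right.2 hsubLt]; exact cLt
      · refine Or.inr (Or.inl ?_)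
        have := comp_eq (S := S) ((openGt c).inter openU)
          ((openLt c).union ((openGt c).inter openU'))
          ?_ ?_ ?_ hx ⟨h, h'⟩
        · rw [this, inter_eq_right.2 hsubA]
        · refine Set.disjoint_left.2 fun a h1 h2 => ?_
          simp only [mem_inter_iff, mem_setOf_eq] at h1
          rcases h2 with h2 | h2
          · simp only [mem_setOf_eq] at h2; linarith [h1.1]
          · simp only [mem_inter_iff, mem_setOf_eq] at h2; linarith [h1.2, h2.2]
        · intro y hy
          rcases hcov3 y hy with h2 | h2 | h2
          · exact Or.inr (Or.inl h2)
          · exact Or.inl ⟨h2.1, h2.2⟩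
          · exact Or.inr (Or.inr ⟨h2.1, h2.2⟩)
        · rw [inter_eq_right.2 hsubA]; exact cGtA
      · refine Or.inr (Or.inr ?_)
        have := comp_eq (S := S) ((openGt c).inter openU')
          ((openLt c).union ((openGt c).inter openU))
          ?_ ?_ ?_ hx ⟨h, h'⟩
        · rw [this, inter_eq_right.2 hsubB]
        · refine Set.disjoint_left.2 fun a h1 h2 => ?_
          simp only [mem_inter_iff, mem_setOf_eq] at h1
          rcases h2 with h2 | h2
          · simp only [mem_setOf_eq] at h2; linarith [h1.1]
          · simp only [mem_inter_iff, mem_setOf_eq] at h2; linarith [h1.2, h2.2]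
        · intro y hy
          rcases hcov3 y hy with h2 | h2 | h2
          · exact Or.inr (Or.inl h2)
          · exact Or.inr (Or.inr ⟨h2.1, h2.2⟩)
          · exact Or.inl ⟨h2.1, h2.2⟩
        · rw [inter_eq_right.2 hsubB]; exact cGtB
  · intro c hc
    have cLv : IsConnected {x : Xs | Qf x = c} := (conn_level_neg hc).isConnected
    have cLt : IsConnected {x : Xs | Qf x < c} := (conn_lt_neg hc).isConnected
    have cGt : IsConnected {x : Xs | c < Qf x} := (conn_gt_neg hc).isConnected
    refine ⟨cLv, cLt, cGt, ?_⟩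
    intro x hx
    set S := {y : Xs | Qf y ≠ c} with hS
    have hsubLt : {y : Xs | Qf y < c} ⊆ S := fun y hy => ne_of_lt hy
    have hsubGt : {y : Xs | c < Qf y} ⊆ S := fun y hy => ne_of_gt hy
    have hcov : S ⊆ {y : Xs | Qf y < c} ∪ {y : Xs | c < Qf y} := fun y hy =>
      lt_or_gt_of_ne (hy : Qf y ≠ c)
    have hdisj : Disjoint {y : Xs | Qf y < c} {y : Xs | c < Qf y} :=
      Set.disjoint_left.2 fun a h1 h2 => by
        simp only [mem_setOf_eq] at h1 h2; linarith
    rcases lt_or_gt_of_ne (hx : Qf x ≠ c) with h | h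
    · refine Or.inl ?_
      have := comp_eq (S := S) (openLt c) (openGt c) hdisj hcov ?_ hx h
      · rw [this, inter_eq_right.2 hsubLt]
      · rw [inter_eq_right.2 hsubLt]; exact cLt
    · refine Or.inr ?_
      have := comp_eq (S := S) (openGt c) (openLt c) hdisj.symm
        (fun y hy => (hcov hy).symm) ?_ hx h
      · rw [this, inter_eq_right.2 hsubGt]
      · rw [inter_eq_right.2 hsubGt]; exact cGt
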